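/- For β > 2, the function Z(γ) = γ^{2/β}·∫_{γ^{−2/β}}^∞ dy/(1 + y^{β/2}) (for γ > 0, with Z(0)=0) is continuous, strictly increasing on [0,∞), satisfies Z(γ) ≤ Γ(1+2/β)Γ(1−2/β)·γ^{2/β} for all γ ≥ 0, and Z(γ)/γ^{2/β} → Γ(1+2/β)Γ(1−2/β) as γ → ∞. -/

import Mathlib

open MeasureTheory Set Real Filter

/-- The guard-zone interference exponent Z(γ) = γ^{2/β} ∫_{γ^{-2/β}}^∞ dy/(1+y^{β/2})
(which equals 0 at γ = 0 since 0^{2/β} = 0). -/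
noncomputable def Zint (β γ : ℝ) : ℝ :=
  γ ^ (2 / β) * ∫ y in Set.Ioi (γ ^ (-(2 / β))), 1 / (1 + y ^ (β / 2))


variable {p : ℝ}

lemma f_meas (p : ℝ) : Measurable fun y : ℝ => 1 / (1 + y ^ p) :=
  by fun_prop

lemma f_int (hp : 1 < p) : IntegrableOn (fun y : ℝ => 1 / (1 + y ^ p)) (Ioi 0) := by
  have h1 : IntegrableOn (fun y : ℝ => 1 / (1 + y ^ p)) (Ioc 0 1) := by
    apply Measure.integrableOn_of_bounded (M := 1)
    · simp [Real.volume_Ioc]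
    · exact (f_meas p).aestronglyMeasurable
    · filter_upwards [ae_restrict_mem measurableSet_Ioc] with y hy
      have h0 : (0:ℝ) < y ^ p := rpow_pos_of_pos hy.1 p
      rw [Real.norm_eq_abs, abs_of_nonneg (by positivity)]
      rw [div_le_one (by linarith)]; linarith
  have h2 : IntegrableOn (fun y : ℝ => 1 / (1 + y ^ p)) (Ioi 1) := by
    apply Integrable.mono' (integrableOn_Ioi_rpow_of_lt (by linarith : -p < -1) one_pos)
      ((f_meas p).aestronglyMeasurable)
    filter_upwards [ae_restrict_mem measurableSet_Ioi] with y hy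
    have hy0 : (0:ℝ) < y := lt_trans one_pos hy
    have h0 : (0:ℝ) < y ^ p := rpow_pos_of_pos hy0 p
    rw [Real.norm_eq_abs, abs_of_nonneg (by positivity), Real.rpow_neg hy0.le,
      div_le_iff₀ (by linarith)]
    rw [inv_mul_eq_div, le_div_iff₀ h0]
    nlinarith
  have := h1.union h2
  rwa [Ioc_union_Ioi_eq_Ioi zero_le_one] at this

lemma f_nonneg_ae (p : ℝ) : 0 ≤ᵐ[volume.restrict (Ioi (0:ℝ))] fun y : ℝ => 1 / (1 + y ^ p) := by
  filter_upwards [ae_restrict_mem measurableSet_Ioi] with y hy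
  have := rpow_pos_of_pos (mem_Ioi.mp hy) p
  positivity

lemma I_eq (hp : 1 < p) :
    ∫ y in Ioi (0:ℝ), 1 / (1 + y ^ p)
      = Real.Gamma (1 + 1 / p) * Real.Gamma (1 - 1 / p) := by
  have hp0 : (0:ℝ) < p := lt_trans one_pos hp
  have ha0 : (0:ℝ) < 1 / p := by positivity
  have ha1 : 1 / p < 1 := by rw [div_lt_one hp0]; exact hp
  have h1a : (0:ℝ) < 1 - 1 / p := by linarith
  set G := Real.Gamma (1 + 1 / p) * Real.Gamma (1 - 1 / p) with hG
  have hGnn : 0 ≤ G :=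
    mul_nonneg (Real.Gamma_nonneg_of_nonneg (by linarith)) (Real.Gamma_nonneg_of_nonneg h1a.le)
  have key : ∫⁻ y in Ioi (0:ℝ), ENNReal.ofReal (1 / (1 + y ^ p)) = ENNReal.ofReal G := by
    calc ∫⁻ y in Ioi (0:ℝ), ENNReal.ofReal (1 / (1 + y ^ p))
        = ∫⁻ y in Ioi (0:ℝ), ∫⁻ t in Ioi (0:ℝ),
            ENNReal.ofReal (exp (-((1 + y ^ p) * t))) := by
          refine setLIntegral_congr_fun measurableSet_Ioi (fun y hy => ?_)
          have hyp := rpow_pos_of_pos (mem_Ioi.mp hy) p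
          have hc : (0:ℝ) < 1 + y ^ p := by linarith
          have hint : IntegrableOn (fun t : ℝ => exp (-((1 + y ^ p) * t))) (Ioi 0) := by
            refine (exp_neg_integrableOn_Ioi 0 hc).congr_fun (fun t _ => by ring_nf)
              measurableSet_Ioi
          rw [← ofReal_integral_eq_lintegral_ofReal hint
            (ae_of_all _ fun t => (exp_pos _).le)]
          congr 1
          have := integral_comp_mul_left_Ioi (fun x => exp (-x)) 0 hc
          simp only [mul_zero, integral_exp_neg_Ioi_zero, smul_eq_mul, mul_one] at this
          rw [this, one_div]
      _ = ∫⁻ t in Ioi (0:ℝ), ∫⁻ y in Ioi (0:ℝ),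
            ENNReal.ofReal (exp (-((1 + y ^ p) * t))) := by
          apply lintegral_lintegral_swap
          apply Measurable.aemeasurable
          fun_prop
      _ = ∫⁻ t in Ioi (0:ℝ),
            ENNReal.ofReal (exp (-t) * (t ^ (-(1 / p)) * Real.Gamma (1 / p + 1))) := by
          refine setLIntegral_congr_fun measurableSet_Ioi (fun t ht => ?_)
          have ht0 : (0:ℝ) < t := mem_Ioi.mp ht
          have hsplit : ∀ y : ℝ, ENNReal.ofReal (exp (-((1 + y ^ p) * t)))
              = ENNReal.ofReal (exp (-t)) * ENNReal.ofReal (exp (-(t * y ^ p))) := by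
            intro y
            rw [← ENNReal.ofReal_mul (exp_pos _).le, ← Real.exp_add]
            ring_nf
          simp_rw [hsplit]
          rw [lintegral_const_mul _ (by fun_prop)]
          have hint : IntegrableOn (fun y : ℝ => exp (-(t * y ^ p))) (Ioi 0) := by
            have := integrableOn_rpow_mul_exp_neg_mul_rpow (s := 0)
              (by norm_num : (-1:ℝ) < 0) hp0 ht0
            simpa [neg_mul] using this
          rw [← ofReal_integral_eq_lintegral_ofReal hint
            (ae_of_all _ fun y => (exp_pos _).le)]
          rw [← ENNReal.ofReal_mul (exp_pos _).le]
          congr 1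
          have := integral_exp_neg_mul_rpow hp0 ht0
          simp only [neg_mul] at this ⊢
          rw [this, neg_div]
      _ = ENNReal.ofReal G := by
          have hre : ∀ t : ℝ, exp (-t) * (t ^ (-(1 / p)) * Real.Gamma (1 / p + 1))
              = exp (-t) * t ^ ((1 - 1 / p) - 1) * Real.Gamma (1 / p + 1) := by
            intro t
            rw [show (1 - 1 / p) - 1 = -(1 / p) by ring]; ring
          simp_rw [hre]
          rw [← ofReal_integral_eq_lintegral_ofReal
            ((Real.GammaIntegral_convergent h1a).mul_const _) ?_]
          · congr 1
            rw [integral_mul_const, ← Real.Gamma_eq_integral h1a, hG, add_comm (1:ℝ) (1/p)]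
            ring
          · filter_upwards [ae_restrict_mem measurableSet_Ioi] with t ht
            have ht0 : (0:ℝ) < t := mem_Ioi.mp ht
            have := rpow_pos_of_pos ht0 ((1 - 1/p) - 1)
            have := Real.Gamma_nonneg_of_nonneg (show (0:ℝ) ≤ 1/p + 1 by positivity)
            positivity
  have hlhs := ofReal_integral_eq_lintegral_ofReal (f_int hp) (f_nonneg_ae p)
  rw [key] at hlhs
  have hnn : 0 ≤ ∫ y in Ioi (0:ℝ), 1 / (1 + y ^ p) :=
    setIntegral_nonneg measurableSet_Ioi fun y hy => by
      have := rpow_pos_of_pos (mem_Ioi.mp hy) p; positivity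
  exact (ENNReal.ofReal_eq_ofReal_iff hnn hGnn).mp hlhs

lemma g_int (hp : 1 < p) {γ : ℝ} (hγ : 0 ≤ γ) :
    IntegrableOn (fun u : ℝ => γ / (γ + u ^ p)) (Ioi 1) := by
  apply Integrable.mono'
    ((integrableOn_Ioi_rpow_of_lt (show -p < -1 by linarith) one_pos).const_mul γ)
    (by fun_prop : Measurable fun u : ℝ => γ / (γ + u ^ p)).aestronglyMeasurable
  filter_upwards [ae_restrict_mem measurableSet_Ioi] with u hu
  have hu0 : (0:ℝ) < u := lt_trans one_pos hu
  have hup : (0:ℝ) < u ^ p := rpow_pos_of_pos hu0 p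
  rw [Real.norm_eq_abs, abs_of_nonneg (by positivity), Real.rpow_neg hu0.le,
    ← div_eq_mul_inv]
  gcongr
  linarith

lemma Z_repr {β : ℝ} (hβ : 2 < β) {γ : ℝ} (hγ : 0 < γ) :
    Zint β γ = ∫ u in Ioi (1:ℝ), γ / (γ + u ^ (β / 2)) := by
  have hβ0 : (0:ℝ) < β := by linarith
  have hb : (0:ℝ) < γ ^ (-(2 / β)) := rpow_pos_of_pos hγ _
  have hsub := integral_comp_mul_right_Ioi (fun y => 1 / (1 + y ^ (β / 2))) 1 hb
  simp only [one_mul, smul_eq_mul] at hsub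
  have h2 : ∫ x in Ioi (γ ^ (-(2 / β))), 1 / (1 + x ^ (β / 2))
      = γ ^ (-(2 / β)) * ∫ x in Ioi (1:ℝ), 1 / (1 + (x * γ ^ (-(2 / β))) ^ (β / 2)) := by
    rw [hsub, ← mul_assoc, mul_inv_cancel₀ hb.ne', one_mul]
  rw [Zint, h2, ← mul_assoc, ← Real.rpow_add hγ, add_neg_cancel, Real.rpow_zero, one_mul]
  refine setIntegral_congr_fun measurableSet_Ioi fun x hx => ?_
  have hx0 : (0:ℝ) < x := lt_trans one_pos hx
  have hxp : (0:ℝ) < x ^ (β / 2) := rpow_pos_of_pos hx0 _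
  have hbp : (γ ^ (-(2 / β))) ^ (β / 2) = γ⁻¹ := by
    rw [← Real.rpow_mul hγ.le, show -(2 / β) * (β / 2) = -1 by field_simp,
      Real.rpow_neg_one]
  rw [Real.mul_rpow hx0.le hb.le, hbp]
  rw [div_eq_div_iff (by positivity) (by positivity)]
  field_simp


/-- Z is continuous and strictly increasing on [0,∞), is dominated by the
no-guard-zone exponent Γ(1+2/β)Γ(1-2/β) γ^{2/β}, and is asymptotically equivalent
to it as γ → ∞. -/
theorem Zint_properties (β : ℝ) (hβ : 2 < β) :
    ContinuousOn (Zint β) (Set.Ici 0) ∧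
    StrictMonoOn (Zint β) (Set.Ici 0) ∧
    (∀ γ, 0 ≤ γ →
      Zint β γ ≤ Real.Gamma (1 + 2 / β) * Real.Gamma (1 - 2 / β) * γ ^ (2 / β)) ∧
    Tendsto (fun γ => Zint β γ / γ ^ (2 / β)) atTop
      (nhds (Real.Gamma (1 + 2 / β) * Real.Gamma (1 - 2 / β))) := by
  have hβ0 : (0:ℝ) < β := by linarith
  have hp : 1 < β / 2 := by linarith
  have ha0 : (0:ℝ) < 2 / β := by positivity
  set G := Real.Gamma (1 + 2 / β) * Real.Gamma (1 - 2 / β) with hGdef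
  have hGI : ∫ y in Ioi (0:ℝ), 1 / (1 + y ^ (β / 2)) = G := by
    rw [I_eq hp, hGdef, one_div_div]
  have hZ0 : Zint β 0 = 0 := by
    simp [Zint, Real.zero_rpow ha0.ne']
  -- the bound
  have hbound : ∀ γ : ℝ, 0 ≤ γ → Zint β γ ≤ G * γ ^ (2 / β) := by
    intro γ hγ
    rcases eq_or_lt_of_le hγ with h | h
    · rw [← h, hZ0, Real.zero_rpow ha0.ne', mul_zero]
    · have hb : (0:ℝ) < γ ^ (-(2 / β)) := rpow_pos_of_pos h _
      calc Zint β γ ≤ γ ^ (2 / β) * ∫ y in Ioi (0:ℝ), 1 / (1 + y ^ (β / 2)) := by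
            apply mul_le_mul_of_nonneg_left _ (rpow_nonneg h.le _)
            exact setIntegral_mono_set (f_int hp) (f_nonneg_ae _)
              ((Ioi_subset_Ioi hb.le).eventuallyLE)
        _ = G * γ ^ (2 / β) := by rw [hGI]; ring
  -- nonnegativity
  have hZnn : ∀ γ : ℝ, 0 ≤ γ → 0 ≤ Zint β γ := by
    intro γ hγ
    rcases eq_or_lt_of_le hγ with h | h
    · rw [← h, hZ0]
    · have hb : (0:ℝ) < γ ^ (-(2 / β)) := rpow_pos_of_pos h _
      refine mul_nonneg (rpow_nonneg h.le _) (setIntegral_nonneg measurableSet_Ioi fun y hy => ?_)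
      have hy0 : (0:ℝ) < y := lt_trans hb hy
      have := rpow_pos_of_pos hy0 (β / 2)
      positivity
  -- positivity of integrals of positive functions on Ioi 1
  have hpos_int : ∀ g : ℝ → ℝ, IntegrableOn g (Ioi 1) → (∀ u ∈ Ioi (1:ℝ), 0 < g u) →
      0 < ∫ u in Ioi (1:ℝ), g u := by
    intro g hgi hgpos
    refine (setIntegral_pos_iff_support_of_nonneg_ae ?_ hgi).mpr ?_
    · filter_upwards [ae_restrict_mem measurableSet_Ioi] with u hu using (hgpos u hu).le
    · refine lt_of_lt_of_le ?_ (measure_mono fun u hu => ⟨(hgpos u hu).ne', hu⟩)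
      simp [Real.volume_Ioi]
  refine ⟨?_, ?_, fun γ hγ => hbound γ hγ, ?_⟩
  · -- continuity
    intro γ0 hγ0
    rcases eq_or_lt_of_le (mem_Ici.mp hγ0) with h | h
    · -- at zero
      have h1 : Tendsto (fun γ : ℝ => G * γ ^ (2 / β)) (nhdsWithin 0 (Ici 0)) (nhds 0) := by
        have hc : ContinuousAt (fun γ : ℝ => γ ^ (2 / β)) 0 :=
          Real.continuousAt_rpow_const 0 _ (Or.inr ha0.le)
        have := (hc.tendsto.mono_left (nhdsWithin_le_nhds (s := Ici (0:ℝ)))).const_mul G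
        simpa [Real.zero_rpow ha0.ne'] using this
      have ht : Tendsto (Zint β) (nhdsWithin 0 (Ici 0)) (nhds 0) := by
        refine tendsto_of_tendsto_of_tendsto_of_le_of_le' tendsto_const_nhds h1 ?_ ?_
        · exact eventually_mem_nhdsWithin.mono fun γ hγ => hZnn γ hγ
        · exact eventually_mem_nhdsWithin.mono fun γ hγ => hbound γ hγ
      rw [← h]
      simpa [ContinuousWithinAt, hZ0] using ht
    · -- at positive points
      apply ContinuousAt.continuousWithinAt
      have hev : Zint β =ᶠ[nhds γ0] fun γ => ∫ u in Ioi (1:ℝ), γ / (γ + u ^ (β / 2)) := by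
        filter_upwards [eventually_gt_nhds h] with γ hγ using Z_repr hβ hγ
      have hF : ContinuousAt (fun γ : ℝ => ∫ u in Ioi (1:ℝ), γ / (γ + u ^ (β / 2))) γ0 := by
        apply continuousAt_of_dominated (bound := fun u : ℝ => (γ0 + 1) * u ^ (-(β / 2)))
        · exact Eventually.of_forall fun γ =>
            (by fun_prop : Measurable fun u : ℝ => γ / (γ + u ^ (β / 2))).aestronglyMeasurable
        · filter_upwards [(eventually_gt_nhds h).and (eventually_lt_nhds (lt_add_one γ0))]
            with γ hγ
          obtain ⟨hγ1, hγ2⟩ := hγ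
          filter_upwards [ae_restrict_mem measurableSet_Ioi] with u hu
          have hu0 : (0:ℝ) < u := lt_trans one_pos hu
          have hup : (0:ℝ) < u ^ (β / 2) := rpow_pos_of_pos hu0 _
          rw [Real.norm_eq_abs, abs_of_nonneg (le_of_lt (div_pos hγ1 (by linarith))),
            Real.rpow_neg hu0.le, ← div_eq_mul_inv]
          gcongr <;> linarith
        · exact (integrableOn_Ioi_rpow_of_lt (by linarith : -(β / 2) < -1) one_pos).const_mul _
        · filter_upwards [ae_restrict_mem measurableSet_Ioi] with u hu
          have hu0 : (0:ℝ) < u := lt_trans one_pos hu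
          have hup : (0:ℝ) < u ^ (β / 2) := rpow_pos_of_pos hu0 _
          exact ContinuousAt.div continuousAt_id (continuousAt_id.add continuousAt_const)
            (by positivity)
      exact hF.congr hev.symm
  · -- strict monotonicity
    intro γ1 h1 γ2 h2 hlt
    rcases eq_or_lt_of_le (mem_Ici.mp h1) with h | h
    · have hγ2 : (0:ℝ) < γ2 := by rw [← h] at hlt; exact hlt
      rw [← h, hZ0, Z_repr hβ hγ2]
      refine hpos_int _ (g_int hp hγ2.le) fun u hu => ?_
      have hu0 : (0:ℝ) < u := lt_trans one_pos hu
      have hup : (0:ℝ) < u ^ (β / 2) := rpow_pos_of_pos hu0 _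
      positivity
    · have hγ2 : (0:ℝ) < γ2 := lt_trans h hlt
      rw [Z_repr hβ h, Z_repr hβ hγ2, ← sub_pos, ← integral_sub (g_int hp hγ2.le) (g_int hp h.le)]
      refine hpos_int _ ((g_int hp hγ2.le).sub (g_int hp h.le)) fun u hu => ?_
      have hu0 : (0:ℝ) < u := lt_trans one_pos hu
      have hup : (0:ℝ) < u ^ (β / 2) := rpow_pos_of_pos hu0 _
      rw [sub_pos, div_lt_div_iff₀ (by linarith) (by linarith)]
      nlinarith
  · -- the limit
    have hup : ∀ c : ℝ, 0 < c → ∫ y in Ioi c, 1 / (1 + y ^ (β / 2)) ≤ G := by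
      intro c hc
      rw [← hGI]
      exact setIntegral_mono_set (f_int hp) (f_nonneg_ae _) ((Ioi_subset_Ioi hc.le).eventuallyLE)
    have hlow : ∀ c : ℝ, 0 < c → G - c ≤ ∫ y in Ioi c, 1 / (1 + y ^ (β / 2)) := by
      intro c hc
      have int1 : IntegrableOn (fun y : ℝ => 1 / (1 + y ^ (β / 2))) (Ioc 0 c) :=
        (f_int hp).mono_set Ioc_subset_Ioi_self
      have int2 : IntegrableOn (fun y : ℝ => 1 / (1 + y ^ (β / 2))) (Ioi c) :=
        (f_int hp).mono_set (Ioi_subset_Ioi hc.le)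
      have hsplit : (∫ y in Ioc 0 c, 1 / (1 + y ^ (β / 2)))
          + ∫ y in Ioi c, 1 / (1 + y ^ (β / 2)) = G := by
        rw [← hGI, ← setIntegral_union (Ioc_disjoint_Ioi le_rfl) measurableSet_Ioi int1 int2,
          Ioc_union_Ioi_eq_Ioi hc.le]
      have hIoc : ∫ y in Ioc 0 c, 1 / (1 + y ^ (β / 2)) ≤ c := by
        calc ∫ y in Ioc 0 c, 1 / (1 + y ^ (β / 2)) ≤ ∫ _ in Ioc (0:ℝ) c, (1:ℝ) := by
              refine setIntegral_mono_on int1 (integrableOn_const ?_)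
                measurableSet_Ioc fun y hy => ?_
              · simp [Real.volume_Ioc]
              · have hy0 : (0:ℝ) < y ^ (β / 2) := rpow_pos_of_pos hy.1 _
                rw [div_le_one (by linarith)]; linarith
          _ = c := by simp [Real.volume_Ioc, hc.le]
      linarith
    have hc : Tendsto (fun γ : ℝ => γ ^ (-(2 / β))) atTop (nhds 0) := tendsto_rpow_neg_atTop ha0
    have hmain : Tendsto (fun γ : ℝ => ∫ y in Ioi (γ ^ (-(2 / β))), 1 / (1 + y ^ (β / 2)))
        atTop (nhds G) := by
      refine tendsto_of_tendsto_of_tendsto_of_le_of_le'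
        (g := fun γ : ℝ => G - γ ^ (-(2 / β))) (h := fun _ : ℝ => G)
        (by simpa using tendsto_const_nhds.sub hc) tendsto_const_nhds ?_ ?_
      · filter_upwards [eventually_gt_atTop (0:ℝ)] with γ hγ
        exact hlow _ (rpow_pos_of_pos hγ _)
      · filter_upwards [eventually_gt_atTop (0:ℝ)] with γ hγ
        exact hup _ (rpow_pos_of_pos hγ _)
    refine hmain.congr' ?_
    filter_upwards [eventually_gt_atTop (0:ℝ)] with γ hγ
    have hne : (γ:ℝ) ^ (2 / β) ≠ 0 := by positivity
    rw [Zint]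
    exact (mul_div_cancel_left₀ _ hne).symm
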